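/- Solution of the annealing differential inequality: Suppose Φ : (p₀, 1) → ℝ is differentiable, satisfies (1-p)Φ'(p) ≥ 1 - 2Φ(p) - (2p-1)β for all p ∈ (p₀,1), is continuous at p₀ with Φ(p₀) = v₀, where 1/2 < p₀ < 1 and β ≥ 0. Then for every p ∈ (p₀, 1): Φ(p) ≥ (1-β)/2 + 2β(1-p) - ((1-p)²/(1-p₀)²)·((1-β)/2 + 2β(1-p₀) - v₀). -/

import Mathlib

/-- Solution of the annealing differential inequality
`(1-p) Φ'(p) ≥ 1 - 2Φ(p) - (2p-1)β` with `Φ(p₀) = v₀`. -/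
theorem annealing_differential_inequality
    (Φ Φ' : ℝ → ℝ) (p₀ v₀ β : ℝ)
    (hp₀ : 1 / 2 < p₀) (hp₁ : p₀ < 1) (hβ : 0 ≤ β)
    (hderiv : ∀ p ∈ Set.Ioo p₀ 1, HasDerivAt Φ (Φ' p) p)
    (hineq : ∀ p ∈ Set.Ioo p₀ 1, 1 - 2 * Φ p - (2 * p - 1) * β ≤ (1 - p) * Φ' p)
    (hcont : ContinuousWithinAt Φ (Set.Ici p₀) p₀)
    (hinit : Φ p₀ = v₀) :
    ∀ p ∈ Set.Ioo p₀ 1,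
      (1 - β) / 2 + 2 * β * (1 - p) -
        ((1 - p) ^ 2 / (1 - p₀) ^ 2) * ((1 - β) / 2 + 2 * β * (1 - p₀) - v₀) ≤ Φ p := by
  intro p hp
  set H : ℝ → ℝ := fun q => (Φ q - (1 - β) / 2 - 2 * β * (1 - q)) * ((1 - q) ^ 2)⁻¹ with hH
  have hpos : ∀ q ∈ Set.Icc p₀ p, (0:ℝ) < 1 - q := fun q hq => by
    have := hq.2; have := hp.2; linarith
  -- continuity of Φ on [p₀, p]
  have hΦcont : ContinuousOn Φ (Set.Icc p₀ p) := by
    intro q hq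
    rcases eq_or_lt_of_le hq.1 with h | h
    · subst h
      exact hcont.mono (Set.Icc_subset_Ici_self)
    · exact ((hderiv q ⟨h, lt_of_le_of_lt hq.2 hp.2⟩).continuousAt).continuousWithinAt
  have hHcont : ContinuousOn H (Set.Icc p₀ p) := by
    apply ContinuousOn.mul
    · exact (hΦcont.sub continuousOn_const).sub (by fun_prop)
    · apply ContinuousOn.inv₀
      · fun_prop
      · intro q hq
        exact pow_ne_zero 2 (ne_of_gt (hpos q hq))
  -- derivative of H
  have hHderiv : ∀ q ∈ Set.Ioo p₀ p, HasDerivAt H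
      ((Φ' q + 2 * β) * ((1 - q) ^ 2)⁻¹
        + (Φ q - (1 - β) / 2 - 2 * β * (1 - q)) * (2 * ((1 - q) ^ 3)⁻¹)) q := by
    intro q hq
    have hq1 : q ∈ Set.Ioo p₀ 1 := ⟨hq.1, lt_trans hq.2 hp.2⟩
    have hqpos : (0:ℝ) < 1 - q := by linarith [hq1.2]
    have h1 : HasDerivAt (fun q => Φ q - (1 - β) / 2 - 2 * β * (1 - q)) (Φ' q + 2 * β) q := by
      have hc : HasDerivAt (fun q : ℝ => 2 * β * (1 - q)) (-(2 * β)) q := by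
        have : HasDerivAt (fun q : ℝ => 1 - q) (-1) q := (hasDerivAt_id q).const_sub 1
        simpa using this.const_mul (2 * β)
      have := ((hderiv q hq1).sub_const ((1 - β) / 2)).sub hc
      exact this.congr_deriv (by ring)
    have h2 : HasDerivAt (fun q : ℝ => ((1 - q) ^ 2)⁻¹) (2 * ((1 - q) ^ 3)⁻¹) q := by
      have hb : HasDerivAt (fun q : ℝ => (1 - q) ^ 2) (-(2 * (1 - q))) q := by
        have h0 : HasDerivAt (fun q : ℝ => 1 - q) (-1) q := (hasDerivAt_id q).const_sub 1
        have := h0.pow 2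
        exact this.congr_deriv (by ring)
      have := hb.inv (pow_ne_zero 2 (ne_of_gt hqpos))
      apply this.congr_deriv
      field_simp
    exact h1.mul h2
  -- the derivative is nonnegative
  have hnn : ∀ q ∈ Set.Ioo p₀ p,
      0 ≤ (Φ' q + 2 * β) * ((1 - q) ^ 2)⁻¹
        + (Φ q - (1 - β) / 2 - 2 * β * (1 - q)) * (2 * ((1 - q) ^ 3)⁻¹) := by
    intro q hq
    have hq1 : q ∈ Set.Ioo p₀ 1 := ⟨hq.1, lt_trans hq.2 hp.2⟩
    have hqpos : (0:ℝ) < 1 - q := by linarith [hq1.2]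
    have key : 0 ≤ (1 - q) * (Φ' q + 2 * β)
        + 2 * (Φ q - (1 - β) / 2 - 2 * β * (1 - q)) := by
      have := hineq q hq1
      nlinarith
    have heq : (Φ' q + 2 * β) * ((1 - q) ^ 2)⁻¹
        + (Φ q - (1 - β) / 2 - 2 * β * (1 - q)) * (2 * ((1 - q) ^ 3)⁻¹)
        = ((1 - q) * (Φ' q + 2 * β)
          + 2 * (Φ q - (1 - β) / 2 - 2 * β * (1 - q))) * ((1 - q) ^ 3)⁻¹ := by
      field_simp
    rw [heq]
    positivity
  -- H is monotone on [p₀, p]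
  have hmono : MonotoneOn H (Set.Icc p₀ p) := by
    apply monotoneOn_of_deriv_nonneg (convex_Icc p₀ p) hHcont
    · intro q hq
      rw [interior_Icc] at hq
      exact (hHderiv q hq).differentiableAt.differentiableWithinAt
    · intro q hq
      rw [interior_Icc] at hq
      rw [(hHderiv q hq).deriv]
      exact hnn q hq
  have hle : H p₀ ≤ H p :=
    hmono (Set.left_mem_Icc.mpr (le_of_lt hp.1)) (Set.right_mem_Icc.mpr (le_of_lt hp.1))
      (le_of_lt hp.1)
  -- unfold and conclude
  have h0pos : (0:ℝ) < 1 - p₀ := by linarith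
  have hppos : (0:ℝ) < 1 - p := by linarith [hp.2]
  rw [hH] at hle
  simp only [hinit] at hle
  have h1 : (v₀ - (1 - β) / 2 - 2 * β * (1 - p₀)) * ((1 - p₀) ^ 2)⁻¹
      ≤ (Φ p - (1 - β) / 2 - 2 * β * (1 - p)) * ((1 - p) ^ 2)⁻¹ := hle
  have h2 : (0:ℝ) < (1 - p₀) ^ 2 := by positivity
  have h3 : (0:ℝ) < (1 - p) ^ 2 := by positivity
  rw [← div_eq_mul_inv, ← div_eq_mul_inv] at h1
  rw [div_le_div_iff₀ h2 h3] at h1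
  have e2' : (1 - p₀) ^ 2 * ((1 - p₀) ^ 2)⁻¹ = 1 := mul_inv_cancel₀ (ne_of_gt h2)
  have step : ((1 - β) / 2 + 2 * β * (1 - p) - Φ p) * (1 - p₀) ^ 2 ≤
      (1 - p) ^ 2 * ((1 - β) / 2 + 2 * β * (1 - p₀) - v₀) := by nlinarith [h1]
  have step2 := mul_le_mul_of_nonneg_right step (inv_nonneg.mpr h2.le)
  rw [mul_assoc, e2', mul_one] at step2
  rw [div_mul_eq_mul_div]
  have hd : (1 - p) ^ 2 * ((1 - β) / 2 + 2 * β * (1 - p₀) - v₀) / (1 - p₀) ^ 2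
      = (1 - p) ^ 2 * ((1 - β) / 2 + 2 * β * (1 - p₀) - v₀) * ((1 - p₀) ^ 2)⁻¹ :=
    div_eq_mul_inv _ _
  linarith [step2, hd.le, hd.ge]
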